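/- There is no countable simple graph H with bounded maximum degree that contains every connected graph of maximum degree at most 3 as a subgraph. -/

import Mathlib

/-!
We prove that no countable graph `H` of bounded maximum degree `Δ` contains every
connected graph of maximum degree at most 3 as a subgraph.

Strategy: for a vertex `w` of `H` and parameters `ℓ, t` and a permutation
`π : Fin t ≃ Fin t`, consider the graph consisting of a path of length `ℓ + 2t + 1`
together with "chords" joining the `(ℓ+1+a)`-th vertex to the `(ℓ+t+2+π(a))`-th vertex.
A counting argument (paths from `w` are at most `D^length` many, and each chord has at
most `D` choices, while there are `t!` permutations) shows that for suitable `t` some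
permutation `π` yields a configuration not embeddable with its origin at `w`.

We then build a single connected graph `G` of maximum degree 3: a ray, carrying at its
`n`-th vertex a pendant path with permutation chords defeating the `n`-th vertex of `H`
(for a surjective enumeration of `H`'s vertices). Any subgraph embedding of `G` into `H`
would map the origin of the ray to some enumerated vertex `w_i`, and restricting the
embedding to the ray prefix together with the `i`-th gadget produces exactly the
forbidden configuration at `w_i`, a contradiction.
-/

namespace Stmt18

open Nat

/-- Arithmetic: for `D ≥ 2` and any `ℓ`, there is `t ≥ 1` with `D ^ (ℓ + 3t + 1) < t!`. -/
lemma arith (D ℓ : ℕ) (hD : 2 ≤ D) : ∃ t, 1 ≤ t ∧ D ^ (ℓ + 3 * t + 1) < Nat.factorial t := by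
  have hu : 1 ≤ D ^ 8 + ℓ + 1 := by omega
  set u := D ^ 8 + ℓ + 1 with hu_def
  have hDu : D ^ 8 < u + 1 := by omega
  refine ⟨2 * u, by omega, ?_⟩
  calc D ^ (ℓ + 3 * (2 * u) + 1) ≤ D ^ (8 * u) := by
        apply Nat.pow_le_pow_right (by omega); omega
    _ = (D ^ 8) ^ u := by rw [← pow_mul]
    _ < (u + 1) ^ u := by apply Nat.pow_lt_pow_left hDu; omega
    _ ≤ (2 * u).descFactorial u := by
        have h := Nat.pow_sub_le_descFactorial (2 * u) u
        have he : 2 * u + 1 - u = u + 1 := by omega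
        rwa [he] at h
    _ ≤ Nat.factorial (2 * u) := by
        have hfe := Nat.factorial_mul_descFactorial (show u ≤ 2 * u by omega)
        calc (2 * u).descFactorial u = 1 * (2 * u).descFactorial u := by ring
          _ ≤ Nat.factorial (2 * u - u) * (2 * u).descFactorial u := by
              apply Nat.mul_le_mul_right
              exact Nat.one_le_iff_ne_zero.mpr (Nat.factorial_ne_zero _)
          _ = Nat.factorial (2 * u) := hfe

lemma fin_eq_mk {n : ℕ} (a : Fin n) (v : ℕ) (h : v < n) (hv : a.val = v) : a = ⟨v, h⟩ :=
  Fin.ext hv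

lemma subset3 {α : Type*} {s : Set α} {x y z : α} (h : s ⊆ {x, y, z}) :
    s.Finite ∧ s.ncard ≤ 3 := by
  have hfin : ({x, y, z} : Set α).Finite :=
    (((Set.finite_singleton z).insert y).insert x)
  refine ⟨hfin.subset h, ?_⟩
  calc s.ncard ≤ ({x, y, z} : Set α).ncard := Set.ncard_le_ncard h hfin
    _ ≤ ({y, z} : Set α).ncard + 1 := Set.ncard_insert_le _ _
    _ ≤ ({z} : Set α).ncard + 1 + 1 := by
        have := Set.ncard_insert_le y ({z} : Set α); omega
    _ ≤ 3 := by rw [Set.ncard_singleton]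

section Config

variable {W : Type} (H : SimpleGraph W)

/-- A walk of length `ℓ + 2t + 1` in `H` starting at `w` with distinct vertices, whose
vertices at positions `ℓ+1+a` and `ℓ+t+2+π(a)` are adjacent for every `a : Fin t`. -/
def Config (w : W) (ℓ t : ℕ) (π : Equiv.Perm (Fin t)) : Prop :=
  ∃ e : ℕ → W, e 0 = w ∧
    (∀ k, k < ℓ + 2 * t + 1 → H.Adj (e k) (e (k + 1))) ∧
    (Set.InjOn e {k | k ≤ ℓ + 2 * t + 1}) ∧
    (∀ a : Fin t, H.Adj (e (ℓ + 1 + a.val)) (e (ℓ + t + 2 + (π a).val)))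

/-- Key counting lemma: some permutation-chord configuration is not realizable at `w`. -/
lemma key (Δ : ℕ) (hdeg : ∀ w : W, (H.neighborSet w).Finite ∧ (H.neighborSet w).ncard ≤ Δ)
    (w : W) (ℓ : ℕ) :
    ∃ t, 1 ≤ t ∧ ∃ π : Equiv.Perm (Fin t), ¬ Config H w ℓ t π := by
  classical
  set D := Δ + 2 with hD_def
  have hcode : ∀ x : W, ∃ c : W → Fin D, Set.InjOn c (H.neighborSet x) := by
    intro x
    obtain ⟨hfin, hcard⟩ := hdeg x
    haveI : Finite (H.neighborSet x) := hfin.to_subtype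
    have hle : Nat.card (H.neighborSet x) ≤ D := by
      rw [Nat.card_coe_set_eq]; omega
    let E := Finite.equivFin (H.neighborSet x)
    refine ⟨fun y => if h : y ∈ H.neighborSet x then Fin.castLE hle (E ⟨y, h⟩)
      else ⟨0, by omega⟩, ?_⟩
    intro y hy z hz hyz
    simp only [dif_pos hy, dif_pos hz] at hyz
    have hv : (E ⟨y, hy⟩ : Fin _).val = (E ⟨z, hz⟩ : Fin _).val := by
      have := congrArg Fin.val hyz
      exact this
    have : E ⟨y, hy⟩ = E ⟨z, hz⟩ := Fin.ext hv
    have := E.injective this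
    exact Subtype.ext_iff.mp this
  choose code hcode using hcode
  obtain ⟨t, ht1, harith⟩ := arith D ℓ (by omega)
  refine ⟨t, ht1, ?_⟩
  by_contra hall
  push_neg at hall
  choose e he0 hchain hinj hmatch using hall
  set M := ℓ + 2 * t + 1 with hM_def
  let Φ : Equiv.Perm (Fin t) → (Fin M → Fin D) × (Fin t → Fin D) := fun π =>
    (fun k => code (e π k.val) (e π (k.val + 1)),
     fun a => code (e π (ℓ + 1 + a.val)) (e π (ℓ + t + 2 + (π a).val)))
  have hmem1 : ∀ (π : Equiv.Perm (Fin t)) (k : ℕ), k < M →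
      e π (k + 1) ∈ H.neighborSet (e π k) := by
    intro π k hk
    exact (SimpleGraph.mem_neighborSet _ _ _).mpr (hchain π k hk)
  have hmem2 : ∀ (π : Equiv.Perm (Fin t)) (a : Fin t),
      e π (ℓ + t + 2 + (π a).val) ∈ H.neighborSet (e π (ℓ + 1 + a.val)) := by
    intro π a
    exact (SimpleGraph.mem_neighborSet _ _ _).mpr (hmatch π a)
  have hΦ : Function.Injective Φ := by
    intro π π' h
    have h1 : ∀ k : Fin M, code (e π k.val) (e π (k.val + 1))
        = code (e π' k.val) (e π' (k.val + 1)) := fun k => congrFun (congrArg Prod.fst h) k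
    have h2 : ∀ a : Fin t, code (e π (ℓ + 1 + a.val)) (e π (ℓ + t + 2 + (π a).val))
        = code (e π' (ℓ + 1 + a.val)) (e π' (ℓ + t + 2 + (π' a).val)) :=
      fun a => congrFun (congrArg Prod.snd h) a
    have hagree : ∀ k, k ≤ M → e π k = e π' k := by
      intro k
      induction k with
      | zero => intro _; rw [he0, he0]
      | succ n ih =>
        intro hk
        have hn : n < M := by omega
        have ihn : e π n = e π' n := ih (by omega)
        have hc := h1 ⟨n, hn⟩
        simp only at hc
        rw [← ihn] at hc
        exact hcode (e π n) (hmem1 π n hn) (ihn ▸ hmem1 π' n hn) hc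
    apply Equiv.ext
    intro a
    have hA : ℓ + 1 + a.val ≤ M := by have := a.isLt; omega
    have hB : ℓ + t + 2 + (π a).val ≤ M := by have := (π a).isLt; omega
    have hB' : ℓ + t + 2 + (π' a).val ≤ M := by have := (π' a).isLt; omega
    have hc := h2 a
    rw [← hagree _ hA, ← hagree _ hB'] at hc
    have h3 : e π (ℓ + t + 2 + (π a).val) = e π (ℓ + t + 2 + (π' a).val) := by
      apply hcode (e π (ℓ + 1 + a.val)) (hmem2 π a) _ hc
      have := hmem2 π' a
      rw [hagree _ hA] at *
      rw [← hagree _ hB'] at this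
      exact this
    have h4 := hinj π (show (ℓ + t + 2 + (π a).val) ∈ {k | k ≤ M} from hB) hB' h3
    have : (π a).val = (π' a).val := by omega
    exact Fin.ext this
  have hcard := Nat.card_le_card_of_injective Φ hΦ
  have hL : Nat.card (Equiv.Perm (Fin t)) = Nat.factorial t := by
    rw [Nat.card_eq_fintype_card, Fintype.card_perm, Fintype.card_fin]
  have hR : Nat.card ((Fin M → Fin D) × (Fin t → Fin D)) = D ^ M * D ^ t := by
    rw [Nat.card_prod, Nat.card_fun, Nat.card_fun]
    simp [Nat.card_eq_fintype_card]
  rw [hL, hR] at hcard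
  have : D ^ M * D ^ t = D ^ (ℓ + 3 * t + 1) := by
    rw [← pow_add]
    congr 1
    omega
  rw [this] at hcard
  omega

end Config

section Diagonal

variable (tf : ℕ → ℕ) (pf : ∀ n, Equiv.Perm (Fin (tf n)))

/-- Vertices of the diagonal graph: a ray `ℕ` plus, for each `n`, a branch gadget. -/
def Vtx : Type := ℕ ⊕ (Σ n : ℕ, Fin (2 * tf n + 2))

/-- Oriented edge relation of the diagonal graph: ray edges, bridges from the `n`-th
ray vertex to the `n`-th gadget, path edges inside gadgets, and permutation chords. -/
def Rel : Vtx tf → Vtx tf → Prop := fun x y =>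
  match x, y with
  | Sum.inl a, Sum.inl b => b = a + 1
  | Sum.inl a, Sum.inr s => s.1 = a ∧ s.2.val = 0
  | Sum.inr _, Sum.inl _ => False
  | Sum.inr s, Sum.inr s' => s.1 = s'.1 ∧ (s'.2.val = s.2.val + 1 ∨
      ∃ a : Fin (tf s.1), s.2.val = 1 + a.val ∧ s'.2.val = tf s.1 + 2 + (pf s.1 a).val)

/-- The diagonal graph. -/
def DG : SimpleGraph (Vtx tf) where
  Adj x y := x ≠ y ∧ (Rel tf pf x y ∨ Rel tf pf y x)
  symm := by
    constructor
    intro x y h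
    exact ⟨h.1.symm, h.2.symm⟩
  loopless := by
    constructor
    intro x h
    exact h.1 rfl

lemma inr_ne {n : ℕ} {j k : Fin (2 * tf n + 2)} (h : j.val ≠ k.val) :
    (Sum.inr ⟨n, j⟩ : Vtx tf) ≠ Sum.inr ⟨n, k⟩ := by
  intro hh
  apply h
  have h2 : (⟨n, j⟩ : Σ n : ℕ, Fin (2 * tf n + 2)) = ⟨n, k⟩ := Sum.inr_injective hh
  have h3 : j = k := by simpa using h2
  rw [h3]

lemma adj_ray (a : ℕ) : (DG tf pf).Adj (Sum.inl a) (Sum.inl (a + 1)) := by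
  refine ⟨?_, Or.inl rfl⟩
  intro h
  have := Sum.inl_injective h
  omega

lemma adj_bridge (n : ℕ) (j : Fin (2 * tf n + 2)) (hj : j.val = 0) :
    (DG tf pf).Adj (Sum.inl n) (Sum.inr ⟨n, j⟩) :=
  ⟨by exact Sum.inl_ne_inr, Or.inl ⟨rfl, hj⟩⟩

lemma adj_path (n : ℕ) (j k : Fin (2 * tf n + 2)) (hjk : k.val = j.val + 1) :
    (DG tf pf).Adj (Sum.inr ⟨n, j⟩) (Sum.inr ⟨n, k⟩) :=
  ⟨inr_ne tf (by omega), Or.inl ⟨rfl, Or.inl hjk⟩⟩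

lemma adj_match (n : ℕ) (a : Fin (tf n)) (j k : Fin (2 * tf n + 2))
    (hj : j.val = 1 + a.val) (hk : k.val = tf n + 2 + (pf n a).val) :
    (DG tf pf).Adj (Sum.inr ⟨n, j⟩) (Sum.inr ⟨n, k⟩) :=
  ⟨inr_ne tf (by have := a.isLt; omega), Or.inl ⟨rfl, Or.inr ⟨a, hj, hk⟩⟩⟩

lemma reach_ray (n : ℕ) : (DG tf pf).Reachable (Sum.inl 0) (Sum.inl n) := by
  induction n with
  | zero => exact SimpleGraph.Reachable.refl _
  | succ m ih => exact ih.trans (SimpleGraph.Adj.reachable (adj_ray tf pf m))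

lemma reach_branch (n : ℕ) : ∀ (j : ℕ) (hj : j < 2 * tf n + 2),
    (DG tf pf).Reachable (Sum.inl 0) (Sum.inr ⟨n, ⟨j, hj⟩⟩) := by
  intro j
  induction j with
  | zero =>
    intro hj
    exact (reach_ray tf pf n).trans
      (SimpleGraph.Adj.reachable (adj_bridge tf pf n ⟨0, hj⟩ rfl))
  | succ m ih =>
    intro hj
    have hm : m < 2 * tf n + 2 := by omega
    exact (ih hm).trans
      (SimpleGraph.Adj.reachable (adj_path tf pf n ⟨m, hm⟩ ⟨m + 1, hj⟩ rfl))

lemma DG_connected : (DG tf pf).Connected := by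
  rw [SimpleGraph.connected_iff]
  refine ⟨?_, ⟨Sum.inl 0⟩⟩
  have hreach : ∀ x : Vtx tf, (DG tf pf).Reachable (Sum.inl 0) x := by
    intro x
    match x with
    | Sum.inl n => exact reach_ray tf pf n
    | Sum.inr ⟨n, j⟩ =>
      have := reach_branch tf pf n j.val j.isLt
      simpa using this
  intro x y
  exact (hreach x).symm.trans (hreach y)

lemma DG_deg (v : Vtx tf) :
    ((DG tf pf).neighborSet v).Finite ∧ ((DG tf pf).neighborSet v).ncard ≤ 3 := by
  rcases v with a | ⟨n, j⟩
  · -- ray vertex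
    apply subset3 (x := Sum.inl (a + 1)) (y := Sum.inl (a - 1))
      (z := Sum.inr ⟨a, ⟨0, by omega⟩⟩)
    intro u hu
    obtain ⟨hne, hrel | hrel⟩ := hu
    · rcases u with b | ⟨m, k⟩
      · simp only [Rel] at hrel
        subst hrel
        simp
      · simp only [Rel] at hrel
        obtain ⟨h1, h2⟩ := hrel
        subst h1
        simp only [Set.mem_insert_iff, Set.mem_singleton_iff]
        refine Or.inr (Or.inr ?_)
        rw [fin_eq_mk k 0 (by omega) h2]
    · rcases u with b | ⟨m, k⟩
      · simp only [Rel] at hrel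
        have : b = a - 1 := by omega
        subst this
        simp
      · simp only [Rel] at hrel
  · -- branch vertex
    have hjlt := j.isLt
    apply subset3
      (x := if j.val = 0 then (Sum.inl n : Vtx tf)
            else Sum.inr ⟨n, ⟨j.val - 1, by omega⟩⟩)
      (y := Sum.inr ⟨n, if h2 : j.val + 1 < 2 * tf n + 2 then ⟨j.val + 1, h2⟩
            else ⟨0, by omega⟩⟩)
      (z := if h3 : 1 ≤ j.val ∧ j.val ≤ tf n then
              Sum.inr ⟨n, ⟨tf n + 2 + (pf n ⟨j.val - 1, by omega⟩).val,
                by have := (pf n ⟨j.val - 1, by omega⟩).isLt; omega⟩⟩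
            else if h4 : tf n + 2 ≤ j.val then
              Sum.inr ⟨n, ⟨1 + ((pf n).symm ⟨j.val - (tf n + 2), by omega⟩).val,
                by have := ((pf n).symm ⟨j.val - (tf n + 2), by omega⟩).isLt; omega⟩⟩
            else Sum.inl n)
    intro u hu
    obtain ⟨hne, hrel | hrel⟩ := hu
    all_goals simp only [Set.mem_insert_iff, Set.mem_singleton_iff]
    · -- Rel (inr ⟨n,j⟩) u
      rcases u with b | ⟨m, k⟩
      · simp only [Rel] at hrel
      · simp only [Rel] at hrel
        obtain ⟨h1, hrest⟩ := hrel
        subst h1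
        rcases hrest with hnext | ⟨a, ha1, ha2⟩
        · -- next vertex
          have hklt := k.isLt
          have hlt : j.val + 1 < 2 * tf n + 2 := by omega
          refine Or.inr (Or.inl ?_)
          rw [dif_pos hlt, fin_eq_mk k (j.val + 1) hlt hnext]
        · -- partner of an A-vertex
          have halt := a.isLt
          have hpa := (pf n a).isLt
          have h3 : 1 ≤ j.val ∧ j.val ≤ tf n := by omega
          refine Or.inr (Or.inr ?_)
          rw [dif_pos h3]
          have haa : a = ⟨j.val - 1, by omega⟩ := fin_eq_mk a (j.val - 1) (by omega) (by omega)
          have hv : (pf n a).val = (pf n (⟨j.val - 1, by omega⟩ : Fin (tf n))).val :=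
            congrArg (fun x => (pf n x).val) haa
          rw [fin_eq_mk k (tf n + 2 + (pf n (⟨j.val - 1, by omega⟩ : Fin (tf n))).val)
            (by have := (pf n (⟨j.val - 1, by omega⟩ : Fin (tf n))).isLt; omega)
            (by omega)]
    · -- Rel u (inr ⟨n,j⟩)
      rcases u with b | ⟨m, k⟩
      · simp only [Rel] at hrel
        obtain ⟨h1, h2⟩ := hrel
        subst h1
        refine Or.inl ?_
        rw [if_pos h2]
      · simp only [Rel] at hrel
        obtain ⟨h1, hrest⟩ := hrel
        subst h1
        rcases hrest with hprev | ⟨a, ha1, ha2⟩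
        · -- previous vertex
          have hklt := k.isLt
          have hj1 : ¬ (j.val = 0) := by omega
          refine Or.inl ?_
          rw [if_neg hj1, fin_eq_mk k (j.val - 1) (by omega) (by omega)]
        · -- j is the partner of an A-vertex: j in the B-block
          have halt := a.isLt
          have hpa := (pf m a).isLt
          have h3 : ¬ (1 ≤ j.val ∧ j.val ≤ tf m) := by omega
          have h4 : tf m + 2 ≤ j.val := by omega
          refine Or.inr (Or.inr ?_)
          rw [dif_neg h3, dif_pos h4]
          have hfa : pf m a = ⟨j.val - (tf m + 2), by omega⟩ :=
            fin_eq_mk _ _ (by omega) (by omega)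
          have hsymm : ((pf m).symm ⟨j.val - (tf m + 2), by omega⟩) = a := by
            conv_lhs => rw [← hfa]
            exact Equiv.symm_apply_apply _ _
          have hval : k.val = 1 + ((pf m).symm ⟨j.val - (tf m + 2), by omega⟩).val := by
            rw [hsymm]
            omega
          rw [fin_eq_mk k (1 + ((pf m).symm ⟨j.val - (tf m + 2), by omega⟩).val)
            (by have := ((pf m).symm ⟨j.val - (tf m + 2), by omega⟩).isLt; omega) hval]

end Diagonal

end Stmt18

/-- There is no countable simple graph of bounded maximum degree containing
every connected graph of maximum degree at most `3` as a subgraph. -/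
theorem stmt_18 :
    ¬ ∃ (W : Type) (_ : Countable W) (H : SimpleGraph W) (Δ : ℕ),
        (∀ w : W, (H.neighborSet w).Finite ∧ (H.neighborSet w).ncard ≤ Δ) ∧
        ∀ (U : Type) (G : SimpleGraph U), G.Connected →
          (∀ u : U, (G.neighborSet u).Finite ∧ (G.neighborSet u).ncard ≤ 3) →
          ∃ f : U → W, Function.Injective f ∧
            ∀ u u' : U, G.Adj u u' → H.Adj (f u) (f u') := by
  rintro ⟨W, hcW, H, Δ, hdeg, huniv⟩
  classical
  -- W is nonempty
  have hW : Nonempty W := by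
    have hconn : (⊥ : SimpleGraph PUnit).Connected := by
      rw [SimpleGraph.connected_iff]
      refine ⟨fun a b => ?_, ⟨PUnit.unit⟩⟩
      cases a; cases b; exact SimpleGraph.Reachable.refl _
    have hdeg0 : ∀ u : PUnit, ((⊥ : SimpleGraph PUnit).neighborSet u).Finite ∧
        ((⊥ : SimpleGraph PUnit).neighborSet u).ncard ≤ 3 := by
      intro u
      have hempty : (⊥ : SimpleGraph PUnit).neighborSet u = ∅ := by
        ext v; simp [SimpleGraph.neighborSet]
      rw [hempty]
      exact ⟨Set.finite_empty, by simp⟩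
    obtain ⟨f0, -, -⟩ := huniv PUnit ⊥ hconn hdeg0
    exact ⟨f0 PUnit.unit⟩
  obtain ⟨enum, henum⟩ := exists_surjective_nat W
  -- choose defeating parameters for every potential root
  have hkey := fun n : ℕ => Stmt18.key H Δ hdeg (enum n) (n + 1)
  choose tf htf pf hbad using hkey
  -- embed the diagonal graph
  obtain ⟨f, finj, fhom⟩ := huniv (Stmt18.Vtx tf) (Stmt18.DG tf pf)
    (Stmt18.DG_connected tf pf) (Stmt18.DG_deg tf pf)
  obtain ⟨i, hi⟩ := henum (f (Sum.inl 0))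
  apply hbad i
  -- construct the configuration witnessing Config
  set t := tf i with ht_def
  refine ⟨fun k => if h : k ≤ i then f (Sum.inl k) else
      if h2 : k - (i + 1) < 2 * tf i + 2 then f (Sum.inr ⟨i, ⟨k - (i + 1), h2⟩⟩)
      else f (Sum.inl k), ?_, ?_, ?_, ?_⟩
  · -- value at 0
    beta_reduce
    rw [dif_pos (by omega : 0 ≤ i)]
    exact hi.symm
  · -- the chain
    intro k hk
    beta_reduce
    rcases lt_trichotomy k i with hlt | heq | hgt
    · rw [dif_pos (by omega : k ≤ i), dif_pos (by omega : k + 1 ≤ i)]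
      exact fhom _ _ (Stmt18.adj_ray tf pf k)
    · subst heq
      rw [dif_pos (le_refl k), dif_neg (by omega : ¬ k + 1 ≤ k),
        dif_pos (by omega : k + 1 - (k + 1) < 2 * tf k + 2)]
      exact fhom _ _ (Stmt18.adj_bridge tf pf k _ (by simp))
    · have hk2 : k - (i + 1) < 2 * tf i + 2 := by omega
      have hk3 : k + 1 - (i + 1) < 2 * tf i + 2 := by omega
      rw [dif_neg (by omega : ¬ k ≤ i), dif_pos hk2,
        dif_neg (by omega : ¬ k + 1 ≤ i), dif_pos hk3]
      exact fhom _ _ (Stmt18.adj_path tf pf i _ _ (by simp only [Fin.mk.injEq]; omega))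
  · -- injectivity
    intro x hx y hy hxy
    simp only [Set.mem_setOf_eq] at hx hy
    beta_reduce at hxy
    by_cases h1 : x ≤ i <;> by_cases h2 : y ≤ i
    · rw [dif_pos h1, dif_pos h2] at hxy
      exact Sum.inl_injective (finj hxy)
    · rw [dif_pos h1, dif_neg h2, dif_pos (by omega : y - (i+1) < 2 * tf i + 2)] at hxy
      exact absurd (finj hxy) (by simp)
    · rw [dif_neg h1, dif_pos (by omega : x - (i+1) < 2 * tf i + 2), dif_pos h2] at hxy
      exact absurd (finj hxy) (by simp)
    · rw [dif_neg h1, dif_pos (by omega : x - (i+1) < 2 * tf i + 2),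
        dif_neg h2, dif_pos (by omega : y - (i+1) < 2 * tf i + 2)] at hxy
      have h3 := finj hxy
      have h4 : (⟨x - (i+1), by omega⟩ : Fin (2 * tf i + 2)) = ⟨y - (i+1), by omega⟩ := by
        simpa using Sum.inr_injective h3
      have h5 := congrArg Fin.val h4
      simp only at h5
      omega
  · -- the matching chords
    intro a
    beta_reduce
    have ha := a.isLt
    have hpa := (pf i a).isLt
    have hA2 : (i + 1) + 1 + a.val - (i + 1) < 2 * tf i + 2 := by omega
    have hB2 : (i + 1) + t + 2 + (pf i a).val - (i + 1) < 2 * tf i + 2 := by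
      simp only [ht_def] at *; omega
    rw [dif_neg (by omega : ¬ (i + 1) + 1 + a.val ≤ i), dif_pos hA2,
      dif_neg (by simp only [ht_def]; omega : ¬ (i + 1) + t + 2 + (pf i a).val ≤ i),
      dif_pos hB2]
    refine fhom _ _ (Stmt18.adj_match tf pf i a _ _ ?_ ?_)
    · show (i + 1) + 1 + a.val - (i + 1) = 1 + a.val
      omega
    · show (i + 1) + t + 2 + (pf i a).val - (i + 1) = tf i + 2 + (pf i a).val
      simp only [ht_def]
      omega
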